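/- Let H be a multigraph, m ≥ 2 an integer, and suppose the line graph L(H) contains a totally odd strong immersion of K_t. Then L(mH) contains a totally odd strong immersion of K_{mt}, where mH is obtained from H by replacing each edge by m parallel copies. -/

import Mathlib

open SimpleGraph

/-- `G` contains a totally odd strong immersion of the complete graph `K t`:
pairwise edge-disjoint odd paths joining the terminals, and no terminal appears
as an interior vertex of any of the paths. -/
def TotallyOddStrongCliqueImmersion {V : Type*} (G : SimpleGraph V) (t : ℕ) : Prop :=
  ∃ φ : Fin t ↪ V, ∃ P : (i j : Fin t) → G.Walk (φ i) (φ j),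
    (∀ i j : Fin t, i < j → (P i j).IsPath) ∧
    (∀ i j : Fin t, i < j → Odd (P i j).length) ∧
    (∀ i j k : Fin t, i < j → φ k ∈ (P i j).support → k = i ∨ k = j) ∧
    (∀ i j i' j' : Fin t, i < j → i' < j' → (i, j) ≠ (i', j') →
      List.Disjoint (P i j).edges (P i' j').edges)

/-- The line graph of a multigraph given by its edge set `E` and endpoint map `ends`. -/
def multiLineGraph {V E : Type*} (ends : E → Sym2 V) : SimpleGraph E where
  Adj e f := e ≠ f ∧ ∃ v, v ∈ ends e ∧ v ∈ ends f
  symm := ⟨by rintro e f ⟨h1, v, h2, h3⟩; exact ⟨h1.symm, v, h3, h2⟩⟩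
  loopless := ⟨by rintro e ⟨h, -⟩; exact h rfl⟩

namespace Statement7Aux

variable {V E : Type*} {m : ℕ}

/-- copy index at position `n`: `c` at even positions, `d` at odd ones. -/
def par (c d : Fin m) (n : ℕ) : Fin m := if Even n then c else d

lemma par_zero (c d : Fin m) : par c d 0 = c := by simp [par]

lemma par_succ (c d : Fin m) (n : ℕ) : par c d (n + 1) = par d c n := by
  unfold par
  by_cases h : Even n <;> simp [h, Nat.even_add_one]

lemma par_odd (c d : Fin m) {n : ℕ} (h : Odd n) : par c d n = d := by
  unfold par
  rw [if_neg (by simpa [Nat.even_iff, Nat.odd_iff] using h)]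

lemma lift_adj (ends : E → Sym2 V) {e f : E}
    (h : (multiLineGraph ends).Adj e f) (a b : Fin m) :
    (multiLineGraph (fun p : E × Fin m => ends p.1)).Adj (e, a) (f, b) := by
  obtain ⟨hne, v, hv1, hv2⟩ := h
  exact ⟨fun hq => hne (congrArg Prod.fst hq), v, hv1, hv2⟩

/-- Lift a walk in the line graph of `H` to the line graph of `mH`, with copy
indices alternating between `c` (even positions) and `d` (odd positions). -/
def liftWalk (ends : E → Sym2 V) (c d : Fin m) :
    ∀ {e f : E}, (W : (multiLineGraph ends).Walk e f) →
      (multiLineGraph (fun p : E × Fin m => ends p.1)).Walk (e, c) (f, par c d W.length)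
  | _, _, .nil => Walk.nil.copy rfl (by rw [Walk.length_nil, par_zero])
  | _, _, .cons h W =>
      (Walk.cons (lift_adj ends h c d) (liftWalk ends d c W)).copy rfl
        (by rw [Walk.length_cons, par_succ])

lemma length_liftWalk (ends : E → Sym2 V) (c d : Fin m) {e f : E}
    (W : (multiLineGraph ends).Walk e f) :
    (liftWalk ends c d W).length = W.length := by
  induction W generalizing c d with
  | nil => simp only [liftWalk, Walk.length_copy]; simp
  | cons h W ih => simp only [liftWalk, Walk.length_copy]; simp [ih]

lemma support_map_liftWalk (ends : E → Sym2 V) (c d : Fin m) {e f : E}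
    (W : (multiLineGraph ends).Walk e f) :
    (liftWalk ends c d W).support.map Prod.fst = W.support := by
  induction W generalizing c d with
  | nil => simp only [liftWalk, Walk.support_copy]; simp
  | cons h W ih => simp only [liftWalk, Walk.support_copy]; simp [ih]

lemma mem_support_liftWalk (ends : E → Sym2 V) {c d : Fin m} {e f : E}
    {W : (multiLineGraph ends).Walk e f} {x : E} {a : Fin m}
    (h : (x, a) ∈ (liftWalk ends c d W).support) :
    ∃ p, p ≤ W.length ∧ x = W.getVert p ∧ a = par c d p := by
  induction W generalizing c d with
  | nil =>
    simp only [liftWalk, Walk.support_copy, Walk.support_nil, List.mem_singleton,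
      Prod.mk.injEq] at h
    exact ⟨0, by simp, by simp [Walk.getVert_zero, h.1], by rw [h.2, par_zero]⟩
  | cons hadj W ih =>
    simp only [liftWalk, Walk.support_copy, Walk.support_cons, List.mem_cons,
      Prod.mk.injEq] at h
    rcases h with ⟨hx, ha⟩ | h
    · exact ⟨0, by simp, by simp [hx.symm], by rw [ha, par_zero]⟩
    · obtain ⟨p, hp, hx, ha⟩ := ih h
      exact ⟨p + 1, by simpa using Nat.succ_le_succ hp,
        by rwa [Walk.getVert_cons_succ], by rw [ha, par_succ]⟩

lemma mem_edges_liftWalk (ends : E → Sym2 V) {c d : Fin m} {e f : E}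
    {W : (multiLineGraph ends).Walk e f} {s : Sym2 (E × Fin m)}
    (h : s ∈ (liftWalk ends c d W).edges) :
    ∃ p, p < W.length ∧
      s = s((W.getVert p, par c d p), (W.getVert (p + 1), par c d (p + 1))) := by
  induction W generalizing c d with
  | nil => simp only [liftWalk, Walk.edges_copy] at h; simp at h
  | cons hadj W ih =>
    simp only [liftWalk, Walk.edges_copy, Walk.edges_cons, List.mem_cons] at h
    rcases h with h | h
    · refine ⟨0, by simp, ?_⟩
      rw [h]
      congr 1 <;> simp [Walk.getVert_zero, par_zero, Walk.getVert_cons_succ, par_succ]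
    · obtain ⟨p, hp, hs⟩ := ih h
      refine ⟨p + 1, by simpa using Nat.succ_le_succ hp, ?_⟩
      rw [hs]
      congr 1 <;> simp [Walk.getVert_cons_succ, par_succ]

lemma edges_map_liftWalk (ends : E → Sym2 V) (c d : Fin m) {e f : E}
    (W : (multiLineGraph ends).Walk e f) :
    (liftWalk ends c d W).edges.map (Sym2.map Prod.fst) = W.edges := by
  induction W generalizing c d with
  | nil => simp only [liftWalk, Walk.edges_copy]; simp
  | cons h W ih => simp only [liftWalk, Walk.edges_copy]; simp [ih, Sym2.map_pair_eq]

lemma getVert_inj {W' : Type*} {G : SimpleGraph W'} {e f : W'} {W : G.Walk e f}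
    (hW : W.support.Nodup) :
    ∀ p q, p ≤ W.length → q ≤ W.length → W.getVert p = W.getVert q → p = q := by
  induction W with
  | nil => intro p q hp hq _; simp only [Walk.length_nil, Nat.le_zero] at hp hq; omega
  | cons hadj W ih =>
    rw [Walk.support_cons, List.nodup_cons] at hW
    intro p q hp hq hpq
    match p, q with
    | 0, 0 => rfl
    | 0, q + 1 =>
      exfalso
      rw [Walk.getVert_zero, Walk.getVert_cons_succ] at hpq
      have hmem : W.getVert q ∈ W.support :=
        Walk.mem_support_iff_exists_getVert.mpr ⟨q, rfl, by simpa using hq⟩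
      rw [← hpq] at hmem
      exact hW.1 hmem
    | p + 1, 0 =>
      exfalso
      rw [Walk.getVert_zero, Walk.getVert_cons_succ] at hpq
      have hmem : W.getVert p ∈ W.support :=
        Walk.mem_support_iff_exists_getVert.mpr ⟨p, rfl, by simpa using hp⟩
      rw [hpq] at hmem
      exact hW.1 hmem
    | p + 1, q + 1 =>
      rw [Walk.getVert_cons_succ, Walk.getVert_cons_succ] at hpq
      have := ih hW.2 p q (by simpa using hp) (by simpa using hq) hpq
      omega



lemma par_inj {c d c' d' : Fin m} {p : ℕ}
    (h1 : par c d p = par c' d' p) (h2 : par c d (p + 1) = par c' d' (p + 1)) :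
    c = c' ∧ d = d' := by
  unfold par at h1 h2
  rcases Nat.even_or_odd p with hp | hp
  · have hp1 : ¬ Even (p + 1) := by simp [Nat.even_add_one, hp]
    rw [if_pos hp, if_pos hp] at h1
    rw [if_neg hp1, if_neg hp1] at h2
    exact ⟨h1, h2⟩
  · have hp0 : ¬ Even p := by simp [Nat.even_iff, Nat.odd_iff.mp hp]
    have hp1 : Even (p + 1) := by simpa [Nat.even_add_one] using hp0
    rw [if_neg hp0, if_neg hp0] at h1
    rw [if_pos hp1, if_pos hp1] at h2
    exact ⟨h2, h1⟩

end Statement7Aux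

/-- If the line graph of a multigraph `H` contains a totally odd strong immersion of `K_t`
and `m ≥ 2`, then the line graph of `mH` contains a totally odd strong immersion of `K_{mt}`. -/
theorem statement7 {V E : Type*} (ends : E → Sym2 V)
    (hloopless : ∀ e, ¬ (ends e).IsDiag) (t m : ℕ) (hm : 2 ≤ m)
    (h : TotallyOddStrongCliqueImmersion (multiLineGraph ends) t) :
    TotallyOddStrongCliqueImmersion
      (multiLineGraph (fun p : E × Fin m => ends p.1)) (m * t) := by
  obtain ⟨φ, P, hpath, hodd, hstrong, hdisj⟩ := h
  have hm0 : 0 < m := by omega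
  have hdivlt : ∀ a b : ℕ, a / m < b / m → a < b := by
    intro a b hab
    by_contra hcon
    push_neg at hcon
    have := Nat.div_le_div_right (c := m) hcon
    omega
  set g : Fin (m * t) → Fin t := fun n =>
    ⟨n.val / m, by rw [Nat.div_lt_iff_lt_mul hm0, mul_comm t m]; exact n.isLt⟩ with hgdef
  set cp : Fin (m * t) → Fin m := fun n => ⟨n.val % m, Nat.mod_lt _ hm0⟩ with hcpdef
  have hrecon : ∀ a b : Fin (m * t), g a = g b → cp a = cp b → a = b := by
    intro a b h1 h2
    have h1' : a.val / m = b.val / m := congrArg Fin.val h1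
    have h2' : a.val % m = b.val % m := congrArg Fin.val h2
    apply Fin.ext
    calc a.val = m * (a.val / m) + a.val % m := (Nat.div_add_mod _ _).symm
      _ = m * (b.val / m) + b.val % m := by rw [h1', h2']
      _ = b.val := Nat.div_add_mod _ _
  have hkey : ∀ I J : Fin (m * t), I < J → g I < g J ∨ (g I = g J ∧ cp I < cp J) := by
    intro I J hIJ
    rcases lt_trichotomy (g I) (g J) with hlt | heq | hgt
    · exact Or.inl hlt
    · refine Or.inr ⟨heq, ?_⟩
      have hd : I.val / m = J.val / m := congrArg Fin.val heq
      have hIJ' : I.val < J.val := hIJ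
      have e1 : m * (J.val / m) + I.val % m = I.val := by rw [← hd]; exact Nat.div_add_mod _ _
      have e2 : m * (J.val / m) + J.val % m = J.val := Nat.div_add_mod _ _
      show I.val % m < J.val % m
      have h3 : m * (J.val / m) + I.val % m < m * (J.val / m) + J.val % m := by
        rw [e1, e2]; exact hIJ'
      exact Nat.lt_of_add_lt_add_left h3
    · exfalso
      have hgt' : J.val / m < I.val / m := hgt
      have := hdivlt _ _ hgt'
      have hIJ' : I.val < J.val := hIJ
      omega
  have hmemS : ∀ z : Sym2 V, ∃ v, v ∈ z := by
    intro z
    induction z using Sym2.ind with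
    | _ a b => exact ⟨a, Sym2.mem_mk_left a b⟩
  have hφ' : Function.Injective (fun n : Fin (m * t) => (φ (g n), cp n)) := by
    intro a b hab
    rw [Prod.mk.injEq] at hab
    exact hrecon a b (φ.injective hab.1) hab.2
  refine ⟨⟨fun n => (φ (g n), cp n), hφ'⟩, fun I J =>
    if hg : g I = g J then
      if hc : cp I = cp J then
        Walk.nil.copy rfl (by show (φ (g I), cp I) = (φ (g J), cp J); rw [hg, hc])
      else
        (Walk.cons
          (show (multiLineGraph (fun p : E × Fin m => ends p.1)).Adj
              (φ (g I), cp I) (φ (g I), cp J) from ⟨fun hq => hc (congrArg Prod.snd hq),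
            (hmemS (ends (φ (g I)))).choose, (hmemS (ends (φ (g I)))).choose_spec,
            (hmemS (ends (φ (g I)))).choose_spec⟩) Walk.nil).copy rfl
          (by show (φ (g I), cp J) = (φ (g J), cp J); rw [hg])
    else if hlt : g I < g J then
      (Statement7Aux.liftWalk ends (cp I) (cp J) (P (g I) (g J))).copy rfl
        (by show (φ (g J), Statement7Aux.par (cp I) (cp J) (P (g I) (g J)).length)
              = (φ (g J), cp J)
            rw [Statement7Aux.par_odd _ _ (hodd _ _ hlt)])
    else
      ((Statement7Aux.liftWalk ends (cp J) (cp I) (P (g J) (g I))).copy rfl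
        (by show (φ (g I), Statement7Aux.par (cp J) (cp I) (P (g J) (g I)).length)
              = (φ (g I), cp I)
            rw [Statement7Aux.par_odd _ _ (hodd _ _ ((le_of_not_gt hlt).lt_of_ne
              (fun hh => hg hh.symm)))])).reverse, ?_, ?_, ?_, ?_⟩
  · -- paths
    intro I J hIJ
    simp only [Function.Embedding.coeFn_mk]
    rcases hkey I J hIJ with hB | ⟨hg, hc⟩
    · rw [dif_neg hB.ne, dif_pos hB, Walk.isPath_def, Walk.support_copy]
      exact List.Nodup.of_map Prod.fst
        (by rw [Statement7Aux.support_map_liftWalk]; exact (hpath _ _ hB).support_nodup)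
    · rw [dif_pos hg, dif_neg hc.ne, Walk.isPath_def, Walk.support_copy]
      simp only [Walk.support_cons, Walk.support_nil, List.nodup_cons, List.mem_singleton,
        List.nodup_nil, and_true, Prod.mk.injEq, not_and]
      exact ⟨fun _ => hc.ne, List.not_mem_nil⟩
  · -- odd lengths
    intro I J hIJ
    simp only [Function.Embedding.coeFn_mk]
    rcases hkey I J hIJ with hB | ⟨hg, hc⟩
    · rw [dif_neg hB.ne, dif_pos hB, Walk.length_copy, Statement7Aux.length_liftWalk]
      exact hodd _ _ hB
    · rw [dif_pos hg, dif_neg hc.ne, Walk.length_copy, Walk.length_cons, Walk.length_nil]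
      exact odd_one
  · -- strong: no terminal in the interior
    intro I J k hIJ hk
    simp only [Function.Embedding.coeFn_mk] at hk
    rcases hkey I J hIJ with hB | ⟨hg, hc⟩
    · rw [dif_neg hB.ne, dif_pos hB, Walk.support_copy] at hk
      obtain ⟨p, hple, hx, ha⟩ := Statement7Aux.mem_support_liftWalk ends hk
      have hmem : φ (g k) ∈ (P (g I) (g J)).support := by
        rw [hx]; exact Walk.mem_support_iff_exists_getVert.mpr ⟨p, rfl, hple⟩
      have hnodup := (hpath _ _ hB).support_nodup
      rcases hstrong _ _ _ hB hmem with h1 | h1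
      · left
        have h0 : (P (g I) (g J)).getVert 0 = φ (g I) := Walk.getVert_zero _
        have hp0 : p = 0 :=
          Statement7Aux.getVert_inj hnodup p 0 hple (by omega) (by rw [← hx, h1, h0])
        exact hrecon k I h1 (by rw [ha, hp0, Statement7Aux.par_zero])
      · right
        have hlen : (P (g I) (g J)).getVert (P (g I) (g J)).length = φ (g J) :=
          Walk.getVert_length _
        have hp0 : p = (P (g I) (g J)).length :=
          Statement7Aux.getVert_inj hnodup p _ hple (le_refl _) (by rw [← hx, h1, hlen])
        exact hrecon k J h1
          (by rw [ha, hp0, Statement7Aux.par_odd _ _ (hodd _ _ hB)])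
    · rw [dif_pos hg, dif_neg hc.ne, Walk.support_copy, Walk.support_cons,
        Walk.support_nil] at hk
      simp only [List.mem_cons, List.mem_singleton, List.not_mem_nil, or_false,
        Prod.mk.injEq] at hk
      rcases hk with ⟨h1, h2⟩ | ⟨h1, h2⟩
      · exact Or.inl (hrecon k I (φ.injective h1) h2)
      · exact Or.inr (hrecon k J ((φ.injective h1).trans hg) h2)
  · -- edge-disjointness
    intro I J I' J' h1 h2 hne s hs hs'
    simp only [Function.Embedding.coeFn_mk] at hs hs'
    rcases hkey I J h1 with hB | ⟨hg, hc⟩ <;> rcases hkey I' J' h2 with hB' | ⟨hg', hc'⟩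
    · -- lift / lift
      rw [dif_neg hB.ne, dif_pos hB, Walk.edges_copy] at hs
      rw [dif_neg hB'.ne, dif_pos hB', Walk.edges_copy] at hs'
      by_cases hgg : (g I, g J) = (g I', g J')
      · rw [Prod.mk.injEq] at hgg
        obtain ⟨hg1, hg2⟩ := hgg
        rw [← hg1, ← hg2] at hs'
        obtain ⟨p, hp, hsp⟩ := Statement7Aux.mem_edges_liftWalk ends hs
        obtain ⟨q, hq, hsq⟩ := Statement7Aux.mem_edges_liftWalk ends hs'
        rw [hsp, Sym2.eq_iff] at hsq
        have hnodup := (hpath _ _ hB).support_nodup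
        rcases hsq with ⟨hA, hBB⟩ | ⟨hA, hBB⟩
        · rw [Prod.mk.injEq] at hA hBB
          have hpq : p = q := Statement7Aux.getVert_inj hnodup p q (by omega) (by omega) hA.1
          subst hpq
          obtain ⟨u1, u2⟩ := Statement7Aux.par_inj hA.2 hBB.2
          have hII : I = I' := hrecon _ _ hg1 u1
          have hJJ : J = J' := hrecon _ _ hg2 u2
          exact hne (by rw [hII, hJJ])
        · rw [Prod.mk.injEq] at hA hBB
          have e1 : p = q + 1 :=
            Statement7Aux.getVert_inj hnodup p (q + 1) (by omega) (by omega) hA.1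
          have e2 : p + 1 = q :=
            Statement7Aux.getVert_inj hnodup (p + 1) q (by omega) (by omega) hBB.1
          omega
      · have hm1 : Sym2.map Prod.fst s ∈ (P (g I) (g J)).edges := by
          rw [← Statement7Aux.edges_map_liftWalk ends (cp I) (cp J) (P (g I) (g J))]
          exact List.mem_map_of_mem hs
        have hm2 : Sym2.map Prod.fst s ∈ (P (g I') (g J')).edges := by
          rw [← Statement7Aux.edges_map_liftWalk ends (cp I') (cp J') (P (g I') (g J'))]
          exact List.mem_map_of_mem hs'
        exact hdisj _ _ _ _ hB hB' hgg hm1 hm2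
    · -- lift / single edge
      rw [dif_neg hB.ne, dif_pos hB, Walk.edges_copy] at hs
      rw [dif_pos hg', dif_neg hc'.ne, Walk.edges_copy, Walk.edges_cons, Walk.edges_nil] at hs'
      simp only [List.mem_singleton] at hs'
      obtain ⟨p, hp, hsp⟩ := Statement7Aux.mem_edges_liftWalk ends hs
      rw [hs'] at hsp
      rw [Sym2.eq_iff] at hsp
      have hne2 : (P (g I) (g J)).getVert p ≠ (P (g I) (g J)).getVert (p + 1) := by
        intro hq
        have := Statement7Aux.getVert_inj (hpath _ _ hB).support_nodup p (p + 1)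
          (by omega) (by omega) hq
        omega
      rcases hsp with ⟨hA, hBB⟩ | ⟨hA, hBB⟩
      · rw [Prod.mk.injEq] at hA hBB
        exact hne2 (hA.1.symm.trans hBB.1)
      · rw [Prod.mk.injEq] at hA hBB
        exact hne2 (hBB.1.symm.trans hA.1)
    · -- single edge / lift
      rw [dif_pos hg, dif_neg hc.ne, Walk.edges_copy, Walk.edges_cons, Walk.edges_nil] at hs
      simp only [List.mem_singleton] at hs
      rw [dif_neg hB'.ne, dif_pos hB', Walk.edges_copy] at hs'
      obtain ⟨p, hp, hsp⟩ := Statement7Aux.mem_edges_liftWalk ends hs'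
      rw [hs] at hsp
      rw [Sym2.eq_iff] at hsp
      have hne2 : (P (g I') (g J')).getVert p ≠ (P (g I') (g J')).getVert (p + 1) := by
        intro hq
        have := Statement7Aux.getVert_inj (hpath _ _ hB').support_nodup p (p + 1)
          (by omega) (by omega) hq
        omega
      rcases hsp with ⟨hA, hBB⟩ | ⟨hA, hBB⟩
      · rw [Prod.mk.injEq] at hA hBB
        exact hne2 (hA.1.symm.trans hBB.1)
      · rw [Prod.mk.injEq] at hA hBB
        exact hne2 (hBB.1.symm.trans hA.1)
    · -- single edge / single edge
      rw [dif_pos hg, dif_neg hc.ne, Walk.edges_copy, Walk.edges_cons, Walk.edges_nil] at hs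
      simp only [List.mem_singleton] at hs
      rw [dif_pos hg', dif_neg hc'.ne, Walk.edges_copy, Walk.edges_cons, Walk.edges_nil] at hs'
      simp only [List.mem_singleton] at hs'
      have heq := hs.symm.trans hs'
      rw [Sym2.eq_iff] at heq
      rcases heq with ⟨hA, hBB⟩ | ⟨hA, hBB⟩
      · rw [Prod.mk.injEq] at hA hBB
        have hII : I = I' := hrecon _ _ (φ.injective hA.1) hA.2
        have hJJ : J = J' := hrecon _ _
          (hg.symm.trans ((φ.injective hBB.1).trans hg')) hBB.2
        exact hne (by rw [hII, hJJ])
      · rw [Prod.mk.injEq] at hA hBB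
        have : cp I < cp I := by
          calc cp I < cp J := hc
            _ = cp I' := hBB.2
            _ < cp J' := hc'
            _ = cp I := hA.2.symm
        exact lt_irrefl _ this
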